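/- Fix m, n ∈ ℕ, an index set Ω ⊆ Fin m × Fin n, real m × n matrices S and g with g i j = 0 for all (i, j) ∉ Ω, and parameters t > 0, γ > 0. Equip m × n real matrices with the Frobenius inner product. If d is a minimizer over all m × n real matrices of T ↦ ⟨g, T⟩_F + (1/(2t))‖T‖_F² + γ·∑_{(i,j)∈Ω} |S i j + T i j|, then d i j = 0 for every (i, j) ∉ Ω, and for every (i, j) ∈ Ω the entry (S + d) i j equals the soft-thresholding of (S i j − t·g i j) at level γt, i.e. sign(S i j − t·g i j)·max(|S i j − t·g i j| − γt, 0). (This is the closed-form solution (21) of the ΔS subproblem: the off-support entries of ΔS^k can be set to 0 and the on-support entries are given by ℓ1 shrinkage.) -/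

import Mathlib

open Matrix

/-- Frobenius inner product `⟨A, B⟩_F = trace(Aᵀ B)`. -/
def frobInner {m n : ℕ} (A B : Matrix (Fin m) (Fin n) ℝ) : ℝ :=
  Matrix.trace (Aᵀ * B)

/-- Frobenius norm `‖A‖_F = sqrt(⟨A, A⟩_F)`. -/
noncomputable def frobNorm {m n : ℕ} (A : Matrix (Fin m) (Fin n) ℝ) : ℝ :=
  Real.sqrt (frobInner A A)

lemma frobInner_eq {m n : ℕ} (A B : Matrix (Fin m) (Fin n) ℝ) :
    frobInner A B = ∑ i, ∑ j, A i j * B i j := by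
  simp only [frobInner, Matrix.trace, Matrix.diag_apply, Matrix.mul_apply,
    Matrix.transpose_apply]
  exact Finset.sum_comm ..

lemma frobNorm_sq {m n : ℕ} (A : Matrix (Fin m) (Fin n) ℝ) :
    frobNorm A ^ 2 = ∑ i, ∑ j, A i j ^ 2 := by
  rw [frobNorm, Real.sq_sqrt]
  · rw [frobInner_eq]; simp only [sq]
  · rw [frobInner_eq]
    apply Finset.sum_nonneg; intro i _
    apply Finset.sum_nonneg; intro j _
    exact mul_self_nonneg _

lemma half_ineq {t a b c e : ℝ} (ht : 0 < t) :
    a/(2*t) + b ≤ c/(2*t) + e ↔ a + 2*t*b ≤ c + 2*t*e := by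
  have h2t : (0:ℝ) < 2*t := by linarith
  constructor
  · intro h
    have h1 : a + 2*t*b = 2*t*(a/(2*t) + b) := by field_simp
    have h2 : c + 2*t*e = 2*t*(c/(2*t) + e) := by field_simp
    rw [h1, h2]
    exact mul_le_mul_of_nonneg_left h h2t.le
  · intro h
    have h1 : a/(2*t) + b = (a + 2*t*b)/(2*t) := by field_simp
    have h2 : c/(2*t) + e = (c + 2*t*e)/(2*t) := by field_simp
    rw [h1, h2]
    exact by gcongr

lemma shrink_min (t γ w : ℝ) (ht : 0 < t) (hγ : 0 < γ) (y : ℝ) :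
    (Real.sign w * max (|w| - γ*t) 0 - w)^2/(2*t) + γ * |Real.sign w * max (|w| - γ*t) 0|
      ≤ (y - w)^2/(2*t) + γ*|y| := by
  have hgt : 0 < γ*t := mul_pos hγ ht
  rcases le_or_gt |w| (γ*t) with h | h
  · have hmax : max (|w| - γ*t) 0 = 0 := max_eq_right (by linarith)
    rw [hmax, mul_zero]
    simp only [abs_zero, mul_zero, add_zero, zero_sub]
    rw [show ((-w)^2/(2*t) : ℝ) = (-w)^2/(2*t) + 0 from (add_zero _).symm, half_ineq ht]
    have hwy : w*y ≤ γ*t*|y| := by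
      rcases abs_le.mp h with ⟨h1, h2⟩
      rcases le_total 0 y with hy | hy
      · rw [abs_of_nonneg hy]; nlinarith
      · rw [abs_of_nonpos hy]; nlinarith
    nlinarith [sq_nonneg y]
  · have hmax : max (|w| - γ*t) 0 = |w| - γ*t := max_eq_left (by linarith)
    rw [hmax]
    rcases le_or_gt 0 w with hw | hw
    · have hw' : 0 < w := by rw [abs_of_nonneg hw] at h; linarith
      have hs : Real.sign w = 1 := Real.sign_of_pos hw'
      have haw : |w| = w := abs_of_nonneg hw
      rw [hs, haw, one_mul]
      have habs : |w - γ*t| = w - γ*t := by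
        apply abs_of_nonneg; rw [haw] at h; linarith
      rw [habs, half_ineq ht]
      nlinarith [sq_nonneg (y - w + γ*t), le_abs_self y]
    · have hs : Real.sign w = -1 := Real.sign_of_neg hw
      have haw : |w| = -w := abs_of_neg hw
      rw [hs, haw]
      have hz : -1 * (-w - γ*t) = w + γ*t := by ring
      rw [hz]
      have habs : |w + γ*t| = -(w + γ*t) := by
        apply abs_of_neg; rw [haw] at h; linarith
      rw [habs, half_ineq ht]
      nlinarith [sq_nonneg (y - w - γ*t), neg_abs_le y]


lemma prox_unique (t γ w z : ℝ) (ht : 0 < t) (hγ : 0 < γ)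
    (hz : ∀ y, (z - w)^2/(2*t) + γ*|z| ≤ (y - w)^2/(2*t) + γ*|y|) :
    z = Real.sign w * max (|w| - γ*t) 0 := by
  set z' := Real.sign w * max (|w| - γ*t) 0 with hz'
  have h1 := (half_ineq ht).mp (hz z')
  have h2 := (half_ineq ht).mp (shrink_min t γ w ht hγ z)
  have h3 := (half_ineq ht).mp (hz ((z + z')/2))
  have habs : |(z + z')/2| ≤ (|z| + |z'|)/2 := by
    rw [abs_div, abs_two]
    gcongr
    exact abs_add_le z z'
  have hmul : 2*t*(γ*|(z+z')/2|) ≤ 2*t*(γ*((|z| + |z'|)/2)) := by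
    apply mul_le_mul_of_nonneg_left _ (by positivity)
    exact mul_le_mul_of_nonneg_left habs hγ.le
  rw [← hz'] at h2
  have hid : ((z + z')/2 - w)^2 = ((z - w)^2 + (z' - w)^2)/2 - (z - z')^2/4 := by ring
  have hsq : (z - z')^2 ≤ 0 := by nlinarith [h1, h2, h3, hmul]
  have hzz : (z - z')^2 = 0 := le_antisymm hsq (sq_nonneg _)
  exact sub_eq_zero.mp ((pow_eq_zero_iff two_ne_zero).mp hzz)

/-- Closed-form solution (21) of the ΔS subproblem: if `g` vanishes off `Ω`
and `d` minimizes `T ↦ ⟨g, T⟩_F + (1/(2t))‖T‖_F² + γ ∑_{(i,j)∈Ω} |S i j + T i j|`,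
then `d` vanishes off `Ω`, and on `Ω` the entries of `S + d` are given by soft
thresholding of the gradient step `S − t g` at level `γ t`. -/
theorem stmt_16 {m n : ℕ} (Ω : Finset (Fin m × Fin n))
    (S g : Matrix (Fin m) (Fin n) ℝ)
    (hg : ∀ i j, (i, j) ∉ Ω → g i j = 0)
    (t γ : ℝ) (ht : 0 < t) (hγ : 0 < γ)
    (d : Matrix (Fin m) (Fin n) ℝ)
    (hmin : IsMinOn (fun T : Matrix (Fin m) (Fin n) ℝ =>
        frobInner g T + (1 / (2 * t)) * frobNorm T ^ 2 +
          γ * ∑ p ∈ Ω, |S p.1 p.2 + T p.1 p.2|)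
      Set.univ d) :
    (∀ i j, (i, j) ∉ Ω → d i j = 0) ∧
      ∀ i j, (i, j) ∈ Ω →
        (S + d) i j =
          Real.sign (S i j - t * g i j) *
            max (|S i j - t * g i j| - γ * t) 0 := by
  set c : ℝ := 1 / (2 * t) with hc
  have hcpos : 0 < c := by positivity
  -- separable form of the objective
  have hf : ∀ T : Matrix (Fin m) (Fin n) ℝ,
      frobInner g T + c * frobNorm T ^ 2 + γ * ∑ p ∈ Ω, |S p.1 p.2 + T p.1 p.2|
        = ∑ a, ∑ b, (g a b * T a b + c * T a b ^ 2)
          + γ * ∑ p ∈ Ω, |S p.1 p.2 + T p.1 p.2| := by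
    intro T
    rw [frobInner_eq, frobNorm_sq]
    simp only [Finset.sum_add_distrib, Finset.mul_sum]
  -- per-entry optimality
  have key : ∀ i j (x : ℝ),
      g i j * d i j + c * d i j ^ 2 + (if (i, j) ∈ Ω then γ * |S i j + d i j| else 0)
        ≤ g i j * x + c * x ^ 2 + (if (i, j) ∈ Ω then γ * |S i j + x| else 0) := by
    intro i j x
    set T : Matrix (Fin m) (Fin n) ℝ := fun a b => if a = i ∧ b = j then x else d a b with hT
    have hTij : T i j = x := by simp [hT]
    have hTne : ∀ a b, ¬(a = i ∧ b = j) → T a b = d a b := by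
      intro a b hab; simp [hT, if_neg hab]
    have h0 := isMinOn_iff.mp hmin T (Set.mem_univ T)
    simp only [hf] at h0
    have hA : ∑ a, ∑ b, (g a b * T a b + c * T a b ^ 2)
        - ∑ a, ∑ b, (g a b * d a b + c * d a b ^ 2)
        = (g i j * x + c * x ^ 2) - (g i j * d i j + c * d i j ^ 2) := by
      rw [← Finset.sum_sub_distrib]
      rw [Finset.sum_eq_single i]
      · rw [← Finset.sum_sub_distrib, Finset.sum_eq_single j]
        · rw [hTij]
        · intro b _ hb
          rw [hTne i b (by tauto)]; ring
        · intro hnj; exact absurd (Finset.mem_univ j) hnj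
      · intro a _ ha
        rw [← Finset.sum_sub_distrib]
        apply Finset.sum_eq_zero
        intro b _
        rw [hTne a b (by tauto)]; ring
      · intro hni; exact absurd (Finset.mem_univ i) hni
    have hB : ∑ p ∈ Ω, |S p.1 p.2 + T p.1 p.2| - ∑ p ∈ Ω, |S p.1 p.2 + d p.1 p.2|
        = (if (i, j) ∈ Ω then |S i j + x| - |S i j + d i j| else 0) := by
      rw [← Finset.sum_sub_distrib]
      by_cases hmem : (i, j) ∈ Ω
      · rw [if_pos hmem]
        rw [Finset.sum_eq_single_of_mem (i, j) hmem]
        · rw [hTij]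
        · intro p _ hp
          rw [hTne p.1 p.2 (by
            intro hab
            exact hp (Prod.ext hab.1 hab.2))]
          ring
      · rw [if_neg hmem]
        apply Finset.sum_eq_zero
        intro p hp
        rw [hTne p.1 p.2 (by
          intro hab
          exact hmem ((Prod.ext hab.1 hab.2 : p = (i, j)) ▸ hp))]
        ring
    by_cases hmem : (i, j) ∈ Ω
    · rw [if_pos hmem] at hB ⊢
      rw [if_pos hmem]
      have hB2 : γ * ∑ p ∈ Ω, |S p.1 p.2 + T p.1 p.2|
          = γ * ∑ p ∈ Ω, |S p.1 p.2 + d p.1 p.2| + γ * |S i j + x| - γ * |S i j + d i j| := by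
        have h' : ∑ p ∈ Ω, |S p.1 p.2 + T p.1 p.2|
            = ∑ p ∈ Ω, |S p.1 p.2 + d p.1 p.2| + (|S i j + x| - |S i j + d i j|) := by
          linarith
        rw [h']; ring
      linarith
    · rw [if_neg hmem] at hB ⊢
      rw [if_neg hmem]
      have hB2 : γ * ∑ p ∈ Ω, |S p.1 p.2 + T p.1 p.2|
          = γ * ∑ p ∈ Ω, |S p.1 p.2 + d p.1 p.2| := by
        have h' : ∑ p ∈ Ω, |S p.1 p.2 + T p.1 p.2|
            = ∑ p ∈ Ω, |S p.1 p.2 + d p.1 p.2| := by linarith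
        rw [h']
      linarith
  constructor
  · intro i j hij
    have k0 := key i j 0
    rw [if_neg hij, if_neg hij, hg i j hij] at k0
    simp only [zero_mul, mul_zero, add_zero, zero_add] at k0
    have hd2 : d i j ^ 2 ≤ 0 := by nlinarith [hcpos, sq_nonneg (d i j)]
    have : d i j ^ 2 = 0 := le_antisymm hd2 (sq_nonneg _)
    exact (pow_eq_zero_iff two_ne_zero).mp this
  · intro i j hij
    set s := S i j with hs
    set w := s - t * g i j with hw
    have hiden : ∀ x : ℝ, g i j * x + c * x ^ 2 = (s + x - w)^2/(2*t) - t * (g i j)^2/2 := by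
      intro x; rw [hc, hw]; field_simp; ring
    have hz : ∀ y : ℝ, (s + d i j - w)^2/(2*t) + γ*|s + d i j| ≤ (y - w)^2/(2*t) + γ*|y| := by
      intro y
      have k := key i j (y - s)
      rw [if_pos hij, if_pos hij, hiden, hiden] at k
      have : s + (y - s) = y := by ring
      rw [this] at k
      linarith
    have := prox_unique t γ w (s + d i j) ht hγ hz
    rw [Matrix.add_apply]
    exact this
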